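/- arXiv:1708.02316 — 2 statements merged into one kernel-verified Lean document; each statement's English description precedes it below -/
import Mathlib

section
/- Let N be an even positive natural number, let d be an integer with d < N/2, and let φ_c > 0 be a real number. Then the set S = {φ ∈ [0, φ_c] : ∃ k ∈ ℤ, exp(i·φ) = exp(i·(−((N·(π − φ_c) − 2π·d)/(N·φ_c))·φ + 2π·k/N))} equals the set {j·φ_c/(N/2 − d) : j ∈ ℕ, 0 ≤ j ≤ N/2 − d}, and hence has exactly N/2 − d + 1 elements. (This is the computational core of the paper's Lemma on boundary singularities: for a boundary singularity of index d/N at a corner of interior angle φ_c, exactly N/2 − d + 1 separatrices, including the two boundary segments, meet at the corner, partitioning a neighborhood of the corner into N/2 − d evenly angled sectors each of angle φ_c/(N/2 − d).) -/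
open Real Complex

/-- The separatrix directions at a boundary singularity of index `d/N` at a
corner of interior angle `φ_c`: the set of angles `φ ∈ [0, φ_c]` solving the
alignment equation `e^{iφ} = e^{i(−φ(N(π−φ_c)−2πd)/(Nφ_c) + 2πk/N)}` for some
integer `k` is exactly `{j·φ_c/(N/2 − d) : 0 ≤ j ≤ N/2 − d}`, and hence has
exactly `N/2 − d + 1` elements. -/
theorem stmt_3 (N : ℕ) (hN : 0 < N) (hNeven : Even N) (d : ℤ) (hd : (d : ℝ) < (N : ℝ) / 2)
    (φc : ℝ) (hφc : 0 < φc) :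
    let m : ℝ := (N : ℝ) / 2 - (d : ℝ)
    let S : Set ℝ := {φ : ℝ | φ ∈ Set.Icc 0 φc ∧ ∃ k : ℤ,
      Complex.exp (Complex.I * φ) =
        Complex.exp (Complex.I *
          (-(((N : ℝ) * (π - φc) - 2 * π * d) / ((N : ℝ) * φc)) * φ + 2 * π * k / N))}
    S = (fun j : ℕ => (j : ℝ) * φc / m) '' {j : ℕ | (j : ℝ) ≤ m} ∧
    S.ncard = ((N : ℤ) / 2 - d + 1).toNat := by
  intro m S
  have hNR : (0:ℝ) < (N:ℝ) := by exact_mod_cast hN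
  have hNe : (N:ℝ) ≠ 0 := ne_of_gt hNR
  have hφe : φc ≠ 0 := ne_of_gt hφc
  have hm : (0:ℝ) < m := sub_pos.mpr hd
  have hme : m ≠ 0 := ne_of_gt hm
  -- characterization of the exponential condition
  have hchar : ∀ φ : ℝ, (∃ k : ℤ,
      Complex.exp (Complex.I * φ) =
        Complex.exp (Complex.I *
          (-(((N : ℝ) * (π - φc) - 2 * π * d) / ((N : ℝ) * φc)) * φ + 2 * π * k / N)))
      ↔ ∃ j : ℤ, φ * m = (j : ℝ) * φc := by
    intro φ
    constructor
    · rintro ⟨k, hk⟩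
      rw [Complex.exp_eq_exp_iff_exists_int] at hk
      obtain ⟨n, hn⟩ := hk
      refine ⟨k + n * N, ?_⟩
      have h1 : φ = -(((N : ℝ) * (π - φc) - 2 * π * d) / ((N : ℝ) * φc)) * φ + 2 * π * k / N + n * (2 * π) := by
        have h2 : Complex.I * (φ:ℝ) = Complex.I *
            ((-(((N : ℝ) * (π - φc) - 2 * π * d) / ((N : ℝ) * φc)) * φ + 2 * π * (k:ℝ) / N + (n:ℝ) * (2 * π) : ℝ) : ℂ) := by
          push_cast at hn ⊢
          linear_combination hn
        exact_mod_cast mul_left_cancel₀ Complex.I_ne_zero h2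
      field_simp at h1
      have h2 : (2*π*(N:ℝ)) * (φ * m) = (2*π*(N:ℝ)) * (((k + n * N : ℤ) : ℝ) * φc) := by
        show (2*π*(N:ℝ)) * (φ * ((N:ℝ)/2 - d)) = _
        push_cast
        linear_combination (N:ℝ) * h1
      exact mul_left_cancel₀ (by positivity) h2
    · rintro ⟨j, hj⟩
      refine ⟨j, ?_⟩
      rw [Complex.exp_eq_exp_iff_exists_int]
      refine ⟨0, ?_⟩
      have h1 : φ = -(((N : ℝ) * (π - φc) - 2 * π * d) / ((N : ℝ) * φc)) * φ + 2 * π * j / N := by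
        have : φ * ((N:ℝ)/2 - d) = (j:ℝ) * φc := hj
        field_simp
        linear_combination (2*π) * this
      have h2 : ((φ:ℝ):ℂ) = ((-(((N : ℝ) * (π - φc) - 2 * π * d) / ((N : ℝ) * φc)) * φ + 2 * π * (j:ℝ) / N : ℝ) : ℂ) := by
        exact_mod_cast h1
      push_cast at h2 ⊢
      linear_combination Complex.I * h2
  -- the set equality
  have hset : S = (fun j : ℕ => (j : ℝ) * φc / m) '' {j : ℕ | (j : ℝ) ≤ m} := by
    ext φ
    constructor
    · rintro ⟨⟨h0, h1⟩, hex⟩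
      obtain ⟨j, hj⟩ := (hchar φ).mp hex
      have hj0 : (0:ℝ) ≤ (j:ℝ) := by
        by_contra hneg
        push_neg at hneg
        nlinarith
      have hjm : (j:ℝ) ≤ m := by nlinarith
      have hcast : ((j.toNat : ℕ) : ℝ) = (j:ℝ) := by
        exact_mod_cast Int.toNat_of_nonneg (by exact_mod_cast hj0 : (0:ℤ) ≤ j)
      refine ⟨j.toNat, ?_, ?_⟩
      · show ((j.toNat : ℕ) : ℝ) ≤ m
        rw [hcast]; exact hjm
      · show ((j.toNat : ℕ) : ℝ) * φc / m = φ
        rw [hcast]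
        field_simp
        linarith [hj]
    · rintro ⟨j, hjm, rfl⟩
      simp only [Set.mem_setOf_eq] at hjm
      refine ⟨⟨by positivity, ?_⟩, (hchar _).mpr ⟨(j:ℤ), ?_⟩⟩
      · rw [div_le_iff₀ hm]
        nlinarith
      · push_cast
        field_simp
  refine ⟨hset, ?_⟩
  -- cardinality
  obtain ⟨p, hp⟩ := hNeven
  have hpd : d < (p:ℤ) := by
    have : (d:ℝ) < (p:ℝ) := by
      rw [hp] at hd; push_cast at hd; linarith
    exact_mod_cast this
  set M : ℕ := ((p:ℤ) - d).toNat with hM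
  have hMm : (M : ℝ) = m := by
    have : ((M:ℤ):ℝ) = ((p:ℤ) - d : ℤ) := by
      rw [hM, Int.toNat_of_nonneg (by omega)]
    push_cast at this
    rw [this]
    simp only [m, hp]
    push_cast
    ring
  have hsetN : {j : ℕ | (j : ℝ) ≤ m} = ↑(Finset.range (M+1)) := by
    ext j
    simp only [Set.mem_setOf_eq, Finset.coe_range, Set.mem_Iio, Nat.lt_add_one_iff]
    rw [← hMm]
    exact_mod_cast Iff.rfl
  rw [hset, hsetN]
  have hinj : Function.Injective (fun j : ℕ => (j : ℝ) * φc / m) := by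
    intro a b hab
    simp only at hab
    have h2 : (a:ℝ) * φc = (b:ℝ) * φc := by
      have := congrArg (fun x : ℝ => x * m) hab
      simpa [div_mul_cancel₀, hme] using this
    have : (a:ℝ) = b := mul_right_cancel₀ hφe h2
    exact_mod_cast this
  rw [Set.ncard_image_of_injective _ hinj, Set.ncard_coe_finset, Finset.card_range]
  have hN2 : (N:ℤ)/2 = (p:ℤ) := by omega
  rw [hN2]
  omega
end

section
/- Let u : ℝ → ℂ satisfy u′(t) = (1 − ‖u(t)‖²)·u(t) for all t ∈ ℝ (in the sense that u has derivative (1 − ‖u(t)‖²)·u(t) at every t), and suppose u(0) ≠ 0. Then u(t) ≠ 0 for every t ∈ ℝ, and the normalized field is constant in time: u(t)/‖u(t)‖ = u(0)/‖u(0)‖ for every t ∈ ℝ. (This is the paper's claim that under the gradient flow of the Ginzburg–Landau penalty term the field evolves pointwise purely in the radial direction: the representation vectors lengthen or shorten radially toward the unit circle 𝕋 without changing their direction.) -/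
/-- Under the gradient flow of the Ginzburg–Landau penalty term the field
evolves pointwise purely in the radial direction: if
`u′(t) = (1 − ‖u(t)‖²)·u(t)` for all `t` and `u(0) ≠ 0`, then `u(t) ≠ 0` for
all `t` and the normalized field `u(t)/‖u(t)‖` is constant in time. -/
theorem stmt_11 (u : ℝ → ℂ)
    (hu : ∀ t : ℝ, HasDerivAt u ((1 - ‖u t‖ ^ 2) • u t) t)
    (h0 : u 0 ≠ 0) :
    (∀ t : ℝ, u t ≠ 0) ∧
    ∀ t : ℝ, u t / (‖u t‖ : ℂ) = u 0 / (‖u 0‖ : ℂ) := by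
  set f : ℝ → ℝ := fun t => 1 - ‖u t‖ ^ 2 with hf_def
  have hu_cont : Continuous u := by
    have : Differentiable ℝ u := fun t => (hu t).differentiableAt
    exact this.continuous
  have hf_cont : Continuous f := by
    continuity
  set F : ℝ → ℝ := fun t => ∫ s in (0:ℝ)..t, f s with hF_def
  have hF : ∀ t, HasDerivAt F (f t) t := fun t =>
    (hf_cont.integral_hasStrictDerivAt 0 t).hasDerivAt
  set g : ℝ → ℂ := fun t => u t * Complex.exp (-(F t : ℂ)) with hg_def
  have hg : ∀ t, HasDerivAt g 0 t := by
    intro t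
    have hexp : HasDerivAt (fun t => Complex.exp (-(F t : ℂ)))
        (Complex.exp (-(F t : ℂ)) * (-(f t : ℂ))) t := by
      have h1 : HasDerivAt (fun t => -(F t : ℂ)) (-(f t : ℂ)) t :=
        ((hF t).ofReal_comp).neg
      exact h1.cexp
    have := (hu t).mul hexp
    convert this using 1
    · rfl
    · rfl
    have hsmul : ((1 - ‖u t‖ ^ 2) • u t) = ((f t : ℂ)) * u t := by
      simp [hf_def, Complex.real_smul]
    rw [hsmul]
    ring
  have hconst : ∀ t, g t = g 0 := by
    intro t
    have hdiff : Differentiable ℝ g := fun x => (hg x).differentiableAt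
    have hderiv : ∀ x, deriv g x = 0 := fun x => (hg x).deriv
    exact is_const_of_deriv_eq_zero hdiff hderiv t 0
  have hF0 : F 0 = 0 := intervalIntegral.integral_same
  have hu_eq : ∀ t, u t = u 0 * Complex.exp ((F t : ℂ)) := by
    intro t
    have h := hconst t
    simp only [hg_def, hF0] at h
    rw [Complex.ofReal_zero, neg_zero, Complex.exp_zero, mul_one] at h
    rw [← h, mul_assoc, ← Complex.exp_add, neg_add_cancel, Complex.exp_zero, mul_one]
  have hnorm : ∀ t, ‖u t‖ = ‖u 0‖ * Real.exp (F t) := by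
    intro t
    rw [hu_eq t, norm_mul, Complex.norm_exp]
    simp
  have hne : ∀ t, u t ≠ 0 := by
    intro t h
    rw [hu_eq t] at h
    exact h0 (by simpa [Complex.exp_ne_zero] using h)
  refine ⟨hne, fun t => ?_⟩
  rw [hnorm t, hu_eq t]
  have h0n : (‖u 0‖ : ℝ) ≠ 0 := norm_ne_zero_iff.mpr h0
  have hexpne : (Real.exp (F t)) ≠ 0 := (Real.exp_pos _).ne'
  have hcexp : (Complex.exp ((F t : ℂ))) = ((Real.exp (F t) : ℝ) : ℂ) := by
    rw [← Complex.ofReal_exp]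
  rw [hcexp]
  push_cast
  rw [mul_div_mul_right _ _ (Complex.exp_ne_zero _)]
end
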